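/- arXiv:2209.07438 — 2 statements merged into one kernel-verified Lean document; each statement's English description precedes it below -/
import Mathlib

section
/- With b = sin²(√σ T)·η²·(σ + 1/σ) + cos²(√σ T)·(1 + η⁴) for σ > 0, T real, η ∈ [0,1), one has 4η⁴ ≤ b², hence b² - 4η⁴ ≥ 0, and the spectral radius of AᵀA (A as in the transition matrix of partially-refreshed HMC on a 1-d quadratic) equals (b + √(b² - 4η⁴))/2. -/
open Real Matrix

lemma eig_iff_det (M : Matrix (Fin 2) (Fin 2) ℝ) (μ : ℝ) :
    Module.End.HasEigenvalue (Matrix.toLin' M) μ ↔ (M - μ • 1).det = 0 := by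
  rw [Module.End.hasEigenvalue_iff, Submodule.ne_bot_iff, ← Matrix.exists_mulVec_eq_zero_iff]
  constructor
  · rintro ⟨v, hv, hv0⟩
    rw [Module.End.mem_eigenspace_iff, Matrix.toLin'_apply] at hv
    exact ⟨v, hv0, by simp [Matrix.sub_mulVec, hv, Matrix.smul_mulVec]⟩
  · rintro ⟨v, hv0, hv⟩
    refine ⟨v, ?_, hv0⟩
    rw [Module.End.mem_eigenspace_iff, Matrix.toLin'_apply]
    rw [Matrix.sub_mulVec, Matrix.smul_mulVec, Matrix.one_mulVec, sub_eq_zero] at hv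
    exact hv

lemma det_HMC (s c sn η μ : ℝ) (hs0 : s ≠ 0) (hpyth : sn ^ 2 + c ^ 2 = 1) :
    ((!![c, (η / s) * sn; -η * s * sn, η ^ 2 * c] : Matrix (Fin 2) (Fin 2) ℝ)ᵀ *
      !![c, (η / s) * sn; -η * s * sn, η ^ 2 * c] - μ • 1).det
      = μ ^ 2 - (sn ^ 2 * η ^ 2 * (s ^ 2 + 1 / s ^ 2) + c ^ 2 * (1 + η ^ 4)) * μ + η ^ 4 := by
  simp [Matrix.det_fin_two, Matrix.mul_apply, Fin.sum_univ_two, Matrix.transpose_apply,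
    Matrix.vecHead, Matrix.vecTail, Matrix.one_apply]
  field_simp
  linear_combination (η ^ 4 * s ^ 2 * (sn ^ 2 + c ^ 2 + 1)) * hpyth

set_option maxHeartbeats 1000000 in
/-- `4η⁴ ≤ b²`, and the spectral radius of `AᵀA` (largest eigenvalue) equals
`(b + √(b² - 4η⁴))/2`, for the partially refreshed HMC transition matrix on a
1-d quadratic. -/
theorem spectral_radius_HMC_transition (σ T η : ℝ) (hσ : 0 < σ) (hT : 0 < T)
    (hη : η ∈ Set.Ico (0 : ℝ) 1) :
    4 * η ^ 4 ≤ (Real.sin (Real.sqrt σ * T) ^ 2 * η ^ 2 * (σ + 1 / σ) +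
        Real.cos (Real.sqrt σ * T) ^ 2 * (1 + η ^ 4)) ^ 2 ∧
    Module.End.HasEigenvalue
      (Matrix.toLin'
        ((!![Real.cos (Real.sqrt σ * T), (η / Real.sqrt σ) * Real.sin (Real.sqrt σ * T);
             -η * Real.sqrt σ * Real.sin (Real.sqrt σ * T),
             η ^ 2 * Real.cos (Real.sqrt σ * T)] : Matrix (Fin 2) (Fin 2) ℝ)ᵀ *
         !![Real.cos (Real.sqrt σ * T), (η / Real.sqrt σ) * Real.sin (Real.sqrt σ * T);
             -η * Real.sqrt σ * Real.sin (Real.sqrt σ * T),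
             η ^ 2 * Real.cos (Real.sqrt σ * T)]))
      (((Real.sin (Real.sqrt σ * T) ^ 2 * η ^ 2 * (σ + 1 / σ) +
          Real.cos (Real.sqrt σ * T) ^ 2 * (1 + η ^ 4)) +
        Real.sqrt ((Real.sin (Real.sqrt σ * T) ^ 2 * η ^ 2 * (σ + 1 / σ) +
          Real.cos (Real.sqrt σ * T) ^ 2 * (1 + η ^ 4)) ^ 2 - 4 * η ^ 4)) / 2) ∧
    ∀ r : ℝ,
      Module.End.HasEigenvalue
        (Matrix.toLin'
          ((!![Real.cos (Real.sqrt σ * T), (η / Real.sqrt σ) * Real.sin (Real.sqrt σ * T);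
               -η * Real.sqrt σ * Real.sin (Real.sqrt σ * T),
               η ^ 2 * Real.cos (Real.sqrt σ * T)] : Matrix (Fin 2) (Fin 2) ℝ)ᵀ *
           !![Real.cos (Real.sqrt σ * T), (η / Real.sqrt σ) * Real.sin (Real.sqrt σ * T);
               -η * Real.sqrt σ * Real.sin (Real.sqrt σ * T),
               η ^ 2 * Real.cos (Real.sqrt σ * T)])) r →
      r ≤ ((Real.sin (Real.sqrt σ * T) ^ 2 * η ^ 2 * (σ + 1 / σ) +
          Real.cos (Real.sqrt σ * T) ^ 2 * (1 + η ^ 4)) +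
        Real.sqrt ((Real.sin (Real.sqrt σ * T) ^ 2 * η ^ 2 * (σ + 1 / σ) +
          Real.cos (Real.sqrt σ * T) ^ 2 * (1 + η ^ 4)) ^ 2 - 4 * η ^ 4)) / 2 := by
  obtain ⟨hη0, hη1⟩ := hη
  set s := Real.sqrt σ with hs
  have hspos : 0 < s := Real.sqrt_pos.mpr hσ
  have hs0 : s ≠ 0 := ne_of_gt hspos
  have hs2 : s ^ 2 = σ := Real.sq_sqrt hσ.le
  set c := Real.cos (s * T) with hc
  set sn := Real.sin (s * T) with hsn
  have hpyth : sn ^ 2 + c ^ 2 = 1 := Real.sin_sq_add_cos_sq _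
  set b := sn ^ 2 * η ^ 2 * (σ + 1 / σ) + c ^ 2 * (1 + η ^ 4) with hb
  have hbσ : b = sn ^ 2 * η ^ 2 * (s ^ 2 + 1 / s ^ 2) + c ^ 2 * (1 + η ^ 4) := by
    rw [hb, hs2]
  have key : sn ^ 2 * η ^ 2 * (s ^ 2 + 1 / s ^ 2) + c ^ 2 * (1 + η ^ 4)
      - 2 * η ^ 2 * (sn ^ 2 + c ^ 2)
      = sn ^ 2 * η ^ 2 * (s - 1 / s) ^ 2 + c ^ 2 * (1 - η ^ 2) ^ 2 := by
    field_simp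
    ring
  have hbge : 2 * η ^ 2 ≤ b := by
    rw [hbσ]
    nlinarith [mul_nonneg (mul_nonneg (sq_nonneg sn) (sq_nonneg η)) (sq_nonneg (s - 1 / s)),
      mul_nonneg (sq_nonneg c) (sq_nonneg (1 - η ^ 2))]
  have hη2 : 0 ≤ η ^ 2 := sq_nonneg η
  have hb0 : 0 ≤ b := by linarith
  have hb2 : 4 * η ^ 4 ≤ b ^ 2 := by nlinarith
  set D := b ^ 2 - 4 * η ^ 4 with hD
  have hD0 : 0 ≤ D := by simp [hD]; linarith
  have hsqD : Real.sqrt D ^ 2 = D := Real.sq_sqrt hD0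
  have hsqD0 : 0 ≤ Real.sqrt D := Real.sqrt_nonneg D
  clear_value s c sn b D
  have hdet : ∀ μ : ℝ, ((!![c, (η / s) * sn; -η * s * sn, η ^ 2 * c] :
        Matrix (Fin 2) (Fin 2) ℝ)ᵀ *
      !![c, (η / s) * sn; -η * s * sn, η ^ 2 * c] - μ • 1).det
      = μ ^ 2 - b * μ + η ^ 4 := by
    intro μ
    rw [hbσ]
    exact det_HMC s c sn η μ hs0 hpyth
  refine ⟨hb2, ?_, ?_⟩
  · rw [eig_iff_det, hdet]
    linear_combination hsqD / 4 + hD / 4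
  · intro r hr
    rw [eig_iff_det, hdet] at hr
    have h1 : (2 * r - b) ^ 2 = Real.sqrt D ^ 2 := by
      rw [hsqD, hD]; nlinarith [hr]
    by_contra hcon
    push_neg at hcon
    have ht : Real.sqrt D < 2 * r - b := by linarith
    have hpos : 0 < 2 * r - b := lt_of_le_of_lt hsqD0 ht
    nlinarith [h1, mul_lt_mul_of_pos_right ht hpos, mul_le_mul_of_nonneg_left ht.le hsqD0]
end

section
/- Let a, b, c, r ∈ ℝ with a, c > 0, ac - b² > 0, and let A = [[a, b],[b, c]] ⊗ I_d. Let S be the symmetric 2d×2d matrix S = [[2bH, (bδ - a)I + cH],[(bδ - a)I + cH, (cδ - 2b)I]] for a symmetric matrix μI ⪯ H ⪯ LI and scalar δ > 0. Then S ⪰ 2rA holds if and only if for every eigenvalue σ ∈ [μ, L] of H: (i) -2ra + 2bσ ≥ 0, (ii) -2rc + cδ - 2b ≥ 0, and (iii) (-2rb + bδ - a + cσ)² ≤ (-2ra + 2bσ)(-2rc + cδ - 2b). -/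
open Matrix

private lemma quad_aux (α β γ : ℝ) :
    (∀ s t : ℝ, 0 ≤ α * s ^ 2 + 2 * β * (s * t) + γ * t ^ 2) ↔
      (0 ≤ α ∧ 0 ≤ γ ∧ β ^ 2 ≤ α * γ) := by
  constructor
  · intro h
    have h1 := h 1 0
    have h2 := h 0 1
    have hα : 0 ≤ α := by nlinarith
    have hγ : 0 ≤ γ := by nlinarith
    refine ⟨hα, hγ, ?_⟩
    rcases eq_or_lt_of_le hα with hα0 | hα0
    · by_contra hcon
      push_neg at hcon
      have hβ : β ≠ 0 := by
        intro hβ0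
        rw [hβ0] at hcon
        nlinarith
      have hkey : 2 * β * (-(γ + 1) / (2 * β) * 1) = -(γ + 1) := by
        field_simp
      have := h (-(γ + 1) / (2 * β)) 1
      rw [hkey, ← hα0] at this
      nlinarith
    · have := h (-β) α
      nlinarith
  · rintro ⟨h1, h2, h3⟩ s t
    rcases eq_or_lt_of_le h1 with hα0 | hα0
    · have hβ : β = 0 := by nlinarith [sq_nonneg β]
      rw [hβ, ← hα0]
      nlinarith [sq_nonneg t]
    · nlinarith [sq_nonneg (α * s + β * t), mul_nonneg (sub_nonneg.2 h3) (sq_nonneg t)]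


/-- Reduction of the Lyapunov condition `S ⪰ 2rA` to per-eigenvalue `2×2`
positive-semidefiniteness conditions, for `A = [[a,b],[b,c]] ⊗ I` and the jump
process matrix `S`, where `H` is symmetric with `μI ⪯ H ⪯ LI`. -/
theorem lyapunov_condition_per_eigenvalue
    (d : ℕ) (a b c r μ L δ : ℝ) (ha : 0 < a) (hc : 0 < c) (hb : b ^ 2 < a * c)
    (hδ : 0 < δ)
    (H : Matrix (Fin d) (Fin d) ℝ) (hH : H.IsHermitian)
    (hμ : (H - μ • (1 : Matrix (Fin d) (Fin d) ℝ)).PosSemidef)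
    (hL : (L • (1 : Matrix (Fin d) (Fin d) ℝ) - H).PosSemidef) :
    (Matrix.fromBlocks
        ((2 * b) • H) ((b * δ - a) • (1 : Matrix (Fin d) (Fin d) ℝ) + c • H)
        ((b * δ - a) • (1 : Matrix (Fin d) (Fin d) ℝ) + c • H)
        ((c * δ - 2 * b) • (1 : Matrix (Fin d) (Fin d) ℝ))
      - (2 * r) • Matrix.fromBlocks
          (a • (1 : Matrix (Fin d) (Fin d) ℝ)) (b • (1 : Matrix (Fin d) (Fin d) ℝ))
          (b • (1 : Matrix (Fin d) (Fin d) ℝ)) (c • (1 : Matrix (Fin d) (Fin d) ℝ))).PosSemidef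
      ↔ ∀ σ ∈ spectrum ℝ H,
          0 ≤ -(2 * r * a) + 2 * b * σ ∧
          0 ≤ -(2 * r * c) + c * δ - 2 * b ∧
          (-(2 * r * b) + b * δ - a + c * σ) ^ 2
            ≤ (-(2 * r * a) + 2 * b * σ) * (-(2 * r * c) + c * δ - 2 * b) := by
  classical
  set U : Matrix (Fin d) (Fin d) ℝ := (hH.eigenvectorUnitary : Matrix (Fin d) (Fin d) ℝ) with hUdef
  set ev : Fin d → ℝ := hH.eigenvalues with hevdef
  have hUU : star U * U = 1 := Unitary.coe_star_mul_self hH.eigenvectorUnitary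
  have hUU' : U * star U = 1 := Unitary.coe_mul_star_self hH.eigenvectorUnitary
  have hspec : H = U * Matrix.diagonal ev * star U := by
    have := hH.spectral_theorem
    simpa using this
  -- spectrum is range of eigenvalues
  have hspectrum : spectrum ℝ H = Set.range ev := hH.spectrum_real_eq_range_eigenvalues
  -- abbreviations for the 2x2 data
  set α : ℝ → ℝ := fun σ => -(2 * r * a) + 2 * b * σ with hαdef
  set β : ℝ → ℝ := fun σ => -(2 * r * b) + b * δ - a + c * σ with hβdef
  set γ : ℝ := -(2 * r * c) + c * δ - 2 * b with hγdef
  set P : Matrix (Fin d) (Fin d) ℝ := (2 * b) • H - (2 * r * a) • 1 with hPdef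
  set Q : Matrix (Fin d) (Fin d) ℝ := (b * δ - a - 2 * r * b) • 1 + c • H with hQdef
  set R : Matrix (Fin d) (Fin d) ℝ := (c * δ - 2 * b - 2 * r * c) • 1 with hRdef
  have hM : (Matrix.fromBlocks
        ((2 * b) • H) ((b * δ - a) • (1 : Matrix (Fin d) (Fin d) ℝ) + c • H)
        ((b * δ - a) • (1 : Matrix (Fin d) (Fin d) ℝ) + c • H)
        ((c * δ - 2 * b) • (1 : Matrix (Fin d) (Fin d) ℝ))
      - (2 * r) • Matrix.fromBlocks
          (a • (1 : Matrix (Fin d) (Fin d) ℝ)) (b • (1 : Matrix (Fin d) (Fin d) ℝ))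
          (b • (1 : Matrix (Fin d) (Fin d) ℝ)) (c • (1 : Matrix (Fin d) (Fin d) ℝ)))
      = Matrix.fromBlocks P Q Q R := by
    rw [Matrix.fromBlocks_smul, sub_eq_add_neg, Matrix.fromBlocks_neg, Matrix.fromBlocks_add]
    have e1 : (2 * b) • H + -((2 * r) • (a • (1 : Matrix (Fin d) (Fin d) ℝ))) = P := by
      rw [hPdef]; module
    have e2 : ((b * δ - a) • (1 : Matrix (Fin d) (Fin d) ℝ) + c • H)
        + -((2 * r) • (b • (1 : Matrix (Fin d) (Fin d) ℝ))) = Q := by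
      rw [hQdef]; module
    have e3 : (c * δ - 2 * b) • (1 : Matrix (Fin d) (Fin d) ℝ)
        + -((2 * r) • (c • (1 : Matrix (Fin d) (Fin d) ℝ))) = R := by
      rw [hRdef]; module
    rw [e1, e2, e3]
  rw [hM, Matrix.posSemidef_iff_dotProduct_mulVec]
  -- dot product identities
  have hdot : ∀ w z : Fin d → ℝ, w ⬝ᵥ z = ∑ i, (star U *ᵥ w) i * (star U *ᵥ z) i := by
    intro w z
    have : w ⬝ᵥ z = w ⬝ᵥ ((U * star U) *ᵥ z) := by rw [hUU', Matrix.one_mulVec]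
    rw [this, ← Matrix.mulVec_mulVec, Matrix.dotProduct_mulVec]
    have hvm : w ᵥ* U = star U *ᵥ w := by
      rw [Matrix.star_eq_conjTranspose, Matrix.conjTranspose_eq_transpose_of_trivial,
        Matrix.mulVec_transpose]
    rw [hvm]
    rfl
  have hHdot : ∀ w z : Fin d → ℝ,
      w ⬝ᵥ (H *ᵥ z) = ∑ i, ev i * ((star U *ᵥ w) i * (star U *ᵥ z) i) := by
    intro w z
    conv_lhs => rw [hspec]
    rw [← Matrix.mulVec_mulVec, ← Matrix.mulVec_mulVec, Matrix.dotProduct_mulVec]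
    have hvm : w ᵥ* U = star U *ᵥ w := by
      rw [Matrix.star_eq_conjTranspose, Matrix.conjTranspose_eq_transpose_of_trivial,
        Matrix.mulVec_transpose]
    rw [hvm]
    simp [dotProduct, Matrix.mulVec_diagonal]
    exact Finset.sum_congr rfl fun i _ => by ring
  -- master quadratic form formula
  have master : ∀ u v : Fin d → ℝ,
      Sum.elim u v ⬝ᵥ (Matrix.fromBlocks P Q Q R *ᵥ Sum.elim u v)
        = ∑ i, (α (ev i) * ((star U *ᵥ u) i) ^ 2
            + 2 * β (ev i) * ((star U *ᵥ u) i * (star U *ᵥ v) i)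
            + γ * ((star U *ᵥ v) i) ^ 2) := by
    intro u v
    rw [Matrix.fromBlocks_mulVec, sumElim_dotProduct_sumElim]
    simp only [Sum.elim_comp_inl, Sum.elim_comp_inr]
    simp only [hPdef, hQdef, hRdef, Matrix.add_mulVec, Matrix.sub_mulVec,
      Matrix.smul_mulVec, Matrix.one_mulVec, dotProduct_add,
      dotProduct_sub, dotProduct_smul, smul_eq_mul]
    rw [hHdot u u, hHdot u v, hHdot v u, hdot u u, hdot u v, hdot v u, hdot v v]
    simp only [Finset.mul_sum, ← Finset.sum_add_distrib, ← Finset.sum_sub_distrib]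
    exact Finset.sum_congr rfl fun i _ => by simp only [hαdef, hβdef, hγdef]; ring
  constructor
  · rintro ⟨hherm, hpos⟩ σ hσ
    rw [hspectrum] at hσ
    obtain ⟨i, rfl⟩ := hσ
    rw [← quad_aux]
    intro s t
    have hu : star U *ᵥ (U *ᵥ Pi.single i s) = Pi.single i s := by
      rw [Matrix.mulVec_mulVec, hUU, Matrix.one_mulVec]
    have hv : star U *ᵥ (U *ᵥ Pi.single i t) = Pi.single i t := by
      rw [Matrix.mulVec_mulVec, hUU, Matrix.one_mulVec]
    have := hpos (Sum.elim (U *ᵥ Pi.single i s) (U *ᵥ Pi.single i t))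
    rw [star_trivial, master, hu, hv] at this
    have hsum : ∑ j, (α (ev j) * ((Pi.single i s : Fin d → ℝ) j) ^ 2
          + 2 * β (ev j) * ((Pi.single i s : Fin d → ℝ) j * (Pi.single i t : Fin d → ℝ) j)
          + γ * ((Pi.single i t : Fin d → ℝ) j) ^ 2)
        = α (ev i) * s ^ 2 + 2 * β (ev i) * (s * t) + γ * t ^ 2 := by
      rw [Finset.sum_eq_single i]
      · simp
      · intro j _ hj
        simp [Pi.single_eq_of_ne hj]
      · intro h
        exact absurd (Finset.mem_univ i) h
    rw [hsum] at this
    exact this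
  · intro hcond
    constructor
    · simp only [Matrix.IsHermitian, Matrix.fromBlocks_conjTranspose,
        Matrix.conjTranspose_add, Matrix.conjTranspose_sub, Matrix.conjTranspose_smul,
        Matrix.conjTranspose_one, hH.eq, hPdef, hQdef, hRdef, star_trivial]
    · intro x
      rw [star_trivial, ← Sum.elim_comp_inl_inr x, master]
      apply Finset.sum_nonneg
      intro i _
      have hev := hcond (ev i) (hspectrum ▸ Set.mem_range_self i)
      exact ((quad_aux (α (ev i)) (β (ev i)) γ).mpr hev) _ _
end
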